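/- Let V₁ = (Y₁,C₁,τ₁,H₁), V₂ = (Y₂,C₂,τ₂,H₂) be infinitesimal stochastic transformations on an open set M ⊆ ℝⁿ and let V₃ = (Y₃,C₃,τ₃,H₃) = [V₁,V₂] be their bracket. Define, for each i, the operator Q_i(h) = Y_i(h) − (−τ_i/2 + C_i)·h acting on smooth ℝᵐ-valued functions h on M. Then the operator commutator satisfies [Q₁,Q₂] = Q₃, i.e. Q₁(Q₂(h)) − Q₂(Q₁(h)) = Q₃(h) for every smooth h: M → ℝᵐ. -/

import Mathlib

open Matrix

/-- Partial derivative `∂ᵢ f` of a scalar function on `ℝⁿ`. -/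
noncomputable def pd {n : ℕ} (i : Fin n) (f : (Fin n → ℝ) → ℝ) (x : Fin n → ℝ) : ℝ :=
  fderiv ℝ f x (Pi.single i 1)

/-- Action `Y(f) = Yⁱ ∂ᵢ f` of a vector field on a scalar function. -/
noncomputable def vfd {n : ℕ} (Y : (Fin n → ℝ) → Fin n → ℝ)
    (f : (Fin n → ℝ) → ℝ) (x : Fin n → ℝ) : ℝ :=
  ∑ j, Y x j * pd j f x

/-- Infinitesimal generator `L(f) = ½ (σσᵀ)^{ij} ∂ᵢ∂ⱼ f + μⁱ ∂ᵢ f` of the SDE `(μ,σ)`. -/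
noncomputable def gen {n m : ℕ} (μ : (Fin n → ℝ) → Fin n → ℝ)
    (σ : (Fin n → ℝ) → Matrix (Fin n) (Fin m) ℝ)
    (f : (Fin n → ℝ) → ℝ) (x : Fin n → ℝ) : ℝ :=
  (1 / 2) * ∑ i, ∑ j, (∑ α, σ x i α * σ x j α) * pd i (pd j f) x
    + ∑ i, μ x i * pd i f x

/-- Entrywise smoothness of a vector-valued function on a set. -/
def SmoothVec {n k : ℕ} (M : Set (Fin n → ℝ)) (f : (Fin n → ℝ) → Fin k → ℝ) : Prop :=
  ∀ i, ContDiffOn ℝ (⊤ : ℕ∞) (fun x => f x i) M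

/-- Entrywise smoothness of a matrix-valued function on a set. -/
def SmoothMat {n k l : ℕ} (M : Set (Fin n → ℝ))
    (f : (Fin n → ℝ) → Matrix (Fin k) (Fin l) ℝ) : Prop :=
  ∀ i j, ContDiffOn ℝ (⊤ : ℕ∞) (fun x => f x i j) M

/-- First component (`Y`-part) of the bracket of two infinitesimal stochastic
transformations: `[Y₁,Y₂]`. -/
noncomputable def brY {n : ℕ} (Y₁ Y₂ : (Fin n → ℝ) → Fin n → ℝ) (x : Fin n → ℝ) :
    Fin n → ℝ := fun i =>
  vfd Y₁ (fun y => Y₂ y i) x - vfd Y₂ (fun y => Y₁ y i) x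

/-- Second component (`C`-part) of the bracket: `Y₁(C₂) − Y₂(C₁) − (C₁C₂ − C₂C₁)`. -/
noncomputable def brC {n m : ℕ} (Y₁ Y₂ : (Fin n → ℝ) → Fin n → ℝ)
    (C₁ C₂ : (Fin n → ℝ) → Matrix (Fin m) (Fin m) ℝ) (x : Fin n → ℝ) :
    Matrix (Fin m) (Fin m) ℝ :=
  Matrix.of fun a b =>
    vfd Y₁ (fun y => C₂ y a b) x - vfd Y₂ (fun y => C₁ y a b) x
      - ((C₁ x * C₂ x) a b - (C₂ x * C₁ x) a b)

/-- Third component (`τ`-part) of the bracket: `Y₁(τ₂) − Y₂(τ₁)`. -/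
noncomputable def brTau {n : ℕ} (Y₁ Y₂ : (Fin n → ℝ) → Fin n → ℝ)
    (τ₁ τ₂ : (Fin n → ℝ) → ℝ) (x : Fin n → ℝ) : ℝ :=
  vfd Y₁ τ₂ x - vfd Y₂ τ₁ x

/-- Fourth component (`H`-part) of the bracket:
`Y₁(H₂) − Y₂(H₁) − (−τ₁/2 + C₁)·H₂ + (−τ₂/2 + C₂)·H₁`. -/
noncomputable def brH {n m : ℕ} (Y₁ Y₂ : (Fin n → ℝ) → Fin n → ℝ)
    (C₁ C₂ : (Fin n → ℝ) → Matrix (Fin m) (Fin m) ℝ)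
    (τ₁ τ₂ : (Fin n → ℝ) → ℝ)
    (H₁ H₂ : (Fin n → ℝ) → Fin m → ℝ) (x : Fin n → ℝ) : Fin m → ℝ := fun a =>
  vfd Y₁ (fun y => H₂ y a) x - vfd Y₂ (fun y => H₁ y a) x
    - ((-(τ₁ x) / 2) * H₂ x a + ∑ b, C₁ x a b * H₂ x b)
    + ((-(τ₂ x) / 2) * H₁ x a + ∑ b, C₂ x a b * H₁ x b)

/-- The operator `Q_i(h) = Y_i(h) − (−τ_i/2 + C_i)·h` on `ℝᵐ`-valued functions. -/
noncomputable def QOp {n m : ℕ} (Y : (Fin n → ℝ) → Fin n → ℝ)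
    (C : (Fin n → ℝ) → Matrix (Fin m) (Fin m) ℝ) (τ : (Fin n → ℝ) → ℝ)
    (h : (Fin n → ℝ) → Fin m → ℝ) (x : Fin n → ℝ) : Fin m → ℝ := fun a =>
  vfd Y (fun y => h y a) x - ((-(τ x) / 2) * h x a + ∑ b, C x a b * h x b)

section Helper
variable {n : ℕ} {M : Set (Fin n → ℝ)} {f g : (Fin n → ℝ) → ℝ} {x : Fin n → ℝ}

lemma dAt (hM : IsOpen M) (hf : ContDiffOn ℝ (⊤ : ℕ∞) f M) (hx : x ∈ M) :
    DifferentiableAt ℝ f x :=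
  (hf.contDiffAt (hM.mem_nhds hx)).differentiableAt (by simp)

lemma pd_smoothOn (hM : IsOpen M) (hf : ContDiffOn ℝ (⊤ : ℕ∞) f M) (i : Fin n) :
    ContDiffOn ℝ (⊤ : ℕ∞) (fun y => pd i f y) M := by
  have h1 : ContDiffOn ℝ (⊤ : ℕ∞) (fderiv ℝ f) M :=
    hf.fderiv_of_isOpen hM (by simp)
  exact h1.clm_apply contDiffOn_const

lemma pd_sub (hf : DifferentiableAt ℝ f x) (hg : DifferentiableAt ℝ g x) (i : Fin n) :
    pd i (fun y => f y - g y) x = pd i f x - pd i g x := by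
  simp [pd, fderiv_fun_sub hf hg]

lemma pd_add (hf : DifferentiableAt ℝ f x) (hg : DifferentiableAt ℝ g x) (i : Fin n) :
    pd i (fun y => f y + g y) x = pd i f x + pd i g x := by
  simp [pd, fderiv_fun_add hf hg]

lemma pd_mul (hf : DifferentiableAt ℝ f x) (hg : DifferentiableAt ℝ g x) (i : Fin n) :
    pd i (fun y => f y * g y) x = pd i f x * g x + f x * pd i g x := by
  simp [pd, fderiv_fun_mul hf hg]; ring

lemma pd_sum {m : ℕ} {F : (Fin n → ℝ) → Fin m → ℝ}
    (hF : ∀ b, DifferentiableAt ℝ (fun y => F y b) x) (i : Fin n) :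
    pd i (fun y => ∑ b, F y b) x = ∑ b, pd i (fun y => F y b) x := by
  simp [pd, fderiv_fun_sum (fun b _ => hF b)]

lemma pd_pd_symm (hM : IsOpen M) (hf : ContDiffOn ℝ (⊤ : ℕ∞) f M) (hx : x ∈ M)
    (i j : Fin n) : pd i (pd j f) x = pd j (pd i f) x := by
  have hfa : ContDiffAt ℝ (⊤ : ℕ∞) f x := hf.contDiffAt (hM.mem_nhds hx)
  have h2 : ContDiffOn ℝ (⊤ : ℕ∞) (fderiv ℝ f) M := hf.fderiv_of_isOpen hM (by simp)
  have hdf : DifferentiableAt ℝ (fderiv ℝ f) x :=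
    (h2.contDiffAt (hM.mem_nhds hx)).differentiableAt (by simp)
  have h1 : ∀ v w : Fin n → ℝ,
      fderiv ℝ (fun y => fderiv ℝ f y v) x w = fderiv ℝ (fderiv ℝ f) x w v := by
    intro v w
    rw [fderiv_clm_apply hdf (differentiableAt_const v)]
    rw [fderiv_fun_const]
    simp
  have hsymm := hfa.isSymmSndFDerivAt (by rw [minSmoothness_of_isRCLikeNormedField]; exact WithTop.coe_le_coe.2 (le_top : (2 : ℕ∞) ≤ ⊤))
  show fderiv ℝ (fun y => fderiv ℝ f y (Pi.single j 1)) x (Pi.single i 1) = _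
  rw [h1, hsymm]
  exact (h1 _ _).symm

lemma pd_const_mul (hg : DifferentiableAt ℝ g x) (c : ℝ) (i : Fin n) :
    pd i (fun y => c * g y) x = c * pd i g x := by
  simp [pd, fderiv_const_mul hg]

lemma vfd_sub {Y : (Fin n → ℝ) → Fin n → ℝ}
    (hf : DifferentiableAt ℝ f x) (hg : DifferentiableAt ℝ g x) :
    vfd Y (fun y => f y - g y) x = vfd Y f x - vfd Y g x := by
  simp [vfd, pd_sub hf hg, mul_sub, Finset.sum_sub_distrib]

lemma vfd_add {Y : (Fin n → ℝ) → Fin n → ℝ}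
    (hf : DifferentiableAt ℝ f x) (hg : DifferentiableAt ℝ g x) :
    vfd Y (fun y => f y + g y) x = vfd Y f x + vfd Y g x := by
  simp [vfd, pd_add hf hg, mul_add, Finset.sum_add_distrib]

lemma vfd_mul {Y : (Fin n → ℝ) → Fin n → ℝ}
    (hf : DifferentiableAt ℝ f x) (hg : DifferentiableAt ℝ g x) :
    vfd Y (fun y => f y * g y) x = vfd Y f x * g x + f x * vfd Y g x := by
  simp only [vfd]
  rw [Finset.sum_mul, Finset.mul_sum, ← Finset.sum_add_distrib]
  exact Finset.sum_congr rfl fun j _ => by rw [pd_mul hf hg]; ring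

lemma vfd_sum {Y : (Fin n → ℝ) → Fin n → ℝ} {m : ℕ} {F : (Fin n → ℝ) → Fin m → ℝ}
    (hF : ∀ b, DifferentiableAt ℝ (fun y => F y b) x) :
    vfd Y (fun y => ∑ b, F y b) x = ∑ b, vfd Y (fun y => F y b) x := by
  simp only [vfd, pd_sum hF, Finset.mul_sum]
  exact Finset.sum_comm

lemma vfd_const_mul {Y : (Fin n → ℝ) → Fin n → ℝ}
    (hg : DifferentiableAt ℝ g x) (c : ℝ) :
    vfd Y (fun y => c * g y) x = c * vfd Y g x := by
  simp only [vfd, pd_const_mul hg]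
  rw [Finset.mul_sum]
  exact Finset.sum_congr rfl fun j _ => by ring

lemma vfd_smoothOn (hM : IsOpen M) {Y : (Fin n → ℝ) → Fin n → ℝ}
    (hY : ∀ i, ContDiffOn ℝ (⊤ : ℕ∞) (fun x => Y x i) M)
    (hf : ContDiffOn ℝ (⊤ : ℕ∞) f M) :
    ContDiffOn ℝ (⊤ : ℕ∞) (fun y => vfd Y f y) M := by
  unfold vfd
  exact ContDiffOn.sum fun j _ => (hY j).mul (pd_smoothOn hM hf j)

lemma vfd_comm (hM : IsOpen M) {Y₁ Y₂ : (Fin n → ℝ) → Fin n → ℝ}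
    (hY₁ : ∀ i, ContDiffOn ℝ (⊤ : ℕ∞) (fun x => Y₁ x i) M)
    (hY₂ : ∀ i, ContDiffOn ℝ (⊤ : ℕ∞) (fun x => Y₂ x i) M)
    (hf : ContDiffOn ℝ (⊤ : ℕ∞) f M) (hx : x ∈ M) :
    vfd Y₁ (vfd Y₂ f) x - vfd Y₂ (vfd Y₁ f) x =
      ∑ k, (vfd Y₁ (fun y => Y₂ y k) x - vfd Y₂ (fun y => Y₁ y k) x) * pd k f x := by
  have hpd : ∀ k : Fin n, DifferentiableAt ℝ (fun y => pd k f y) x :=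
    fun k => dAt hM (pd_smoothOn hM hf k) hx
  have key : ∀ (Z W : (Fin n → ℝ) → Fin n → ℝ),
      (∀ i, ContDiffOn ℝ (⊤ : ℕ∞) (fun x => W x i) M) →
      vfd Z (vfd W f) x =
        (∑ j, ∑ k, Z x j * (pd j (fun y => W y k) x * pd k f x))
          + ∑ j, ∑ k, Z x j * W x k * pd j (pd k f) x := by
    intro Z W hW
    have hexp : ∀ j : Fin n, pd j (vfd W f) x
        = ∑ k, (pd j (fun y => W y k) x * pd k f x + W x k * pd j (pd k f) x) := by
      intro j
      have : pd j (vfd W f) x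
          = ∑ k, pd j (fun y => W y k * pd k f y) x := by
        have := pd_sum (F := fun y k => W y k * pd k f y)
          (fun k => (dAt hM (hW k) hx).mul (hpd k)) j
        exact this
      rw [this]
      exact Finset.sum_congr rfl fun k _ => pd_mul (dAt hM (hW k) hx) (hpd k) j
    calc vfd Z (vfd W f) x = ∑ j, Z x j * pd j (vfd W f) x := rfl
      _ = ∑ j, ∑ k, (Z x j * (pd j (fun y => W y k) x * pd k f x)
            + Z x j * W x k * pd j (pd k f) x) := by
          refine Finset.sum_congr rfl fun j _ => ?_
          rw [hexp j, Finset.mul_sum]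
          exact Finset.sum_congr rfl fun k _ => by ring
      _ = _ := by rw [← Finset.sum_add_distrib]
                  exact Finset.sum_congr rfl fun j _ => Finset.sum_add_distrib
  rw [key Y₁ Y₂ hY₂, key Y₂ Y₁ hY₁]
  have hcancel : ∑ j, ∑ k, Y₁ x j * Y₂ x k * pd j (pd k f) x
      = ∑ j, ∑ k, Y₂ x j * Y₁ x k * pd j (pd k f) x := by
    rw [Finset.sum_comm]
    refine Finset.sum_congr rfl fun j _ => Finset.sum_congr rfl fun k _ => ?_
    rw [pd_pd_symm hM hf hx k j]
    ring
  rw [hcancel, add_sub_add_right_eq_sub]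
  rw [show (∑ j, ∑ k, Y₁ x j * (pd j (fun y => Y₂ y k) x * pd k f x))
      = ∑ k, ∑ j, Y₁ x j * (pd j (fun y => Y₂ y k) x * pd k f x) from Finset.sum_comm,
    show (∑ j, ∑ k, Y₂ x j * (pd j (fun y => Y₁ y k) x * pd k f x))
      = ∑ k, ∑ j, Y₂ x j * (pd j (fun y => Y₁ y k) x * pd k f x) from Finset.sum_comm,
    ← Finset.sum_sub_distrib]
  refine Finset.sum_congr rfl fun k _ => ?_
  rw [vfd, vfd, sub_mul, Finset.sum_mul, Finset.sum_mul]
  congr 1 <;> exact Finset.sum_congr rfl fun j _ => by ring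

end Helper


section Helper2
variable {n m : ℕ} {M : Set (Fin n → ℝ)}

lemma keyQ (hM : IsOpen M) {Z Y : (Fin n → ℝ) → Fin n → ℝ}
    {C : (Fin n → ℝ) → Matrix (Fin m) (Fin m) ℝ} {τ : (Fin n → ℝ) → ℝ}
    {h : (Fin n → ℝ) → Fin m → ℝ} {x : Fin n → ℝ}
    (hY : SmoothVec M Y) (hC : SmoothMat M C)
    (hτ : ContDiffOn ℝ (⊤ : ℕ∞) τ M) (hh : SmoothVec M h) (hx : x ∈ M) (c : Fin m) :
    vfd Z (fun y => vfd Y (fun z => h z c) y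
        - (-(τ y) / 2 * h y c + ∑ b, C y c b * h y b)) x
      = vfd Z (vfd Y (fun z => h z c)) x
        - ((-2⁻¹ * vfd Z τ x) * h x c + (-(τ x) / 2) * vfd Z (fun z => h z c) x
          + ((∑ b, vfd Z (fun y => C y c b) x * h x b)
            + ∑ b, C x c b * vfd Z (fun z => h z b) x)) := by
  have dh : ∀ b, DifferentiableAt ℝ (fun z => h z b) x := fun b => dAt hM (hh b) hx
  have dτ' : DifferentiableAt ℝ τ x := dAt hM hτ hx
  have dC : ∀ b, DifferentiableAt ℝ (fun y => C y c b) x := fun b => dAt hM (hC c b) hx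
  have dA : DifferentiableAt ℝ (vfd Y (fun z => h z c)) x :=
    dAt hM (vfd_smoothOn hM hY (hh c)) hx
  have dneg : DifferentiableAt ℝ (fun y => -(τ y) / 2) x := by
    rw [show (fun y => -(τ y) / 2) = fun y => (-2⁻¹ : ℝ) * τ y from funext fun y => by ring]
    exact dτ'.const_mul _
  have dB1 : DifferentiableAt ℝ (fun y => -(τ y) / 2 * h y c) x := dneg.mul (dh c)
  have dB2 : DifferentiableAt ℝ (fun y => ∑ b, C y c b * h y b) x :=
    DifferentiableAt.fun_sum fun b _ => (dC b).fun_mul (dh b)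
  have hτhalf : vfd Z (fun y => -(τ y) / 2) x = -2⁻¹ * vfd Z τ x := by
    rw [show (fun y => -(τ y) / 2) = fun y => (-2⁻¹ : ℝ) * τ y from
      funext fun y => by ring, vfd_const_mul dτ']
  rw [vfd_sub dA (dB1.fun_add dB2), vfd_add dB1 dB2, vfd_mul dneg (dh c),
    vfd_sum (fun b => (dC b).fun_mul (dh b)), hτhalf,
    show (∑ b, vfd Z (fun y => C y c b * h y b) x)
        = ∑ b, (vfd Z (fun y => C y c b) x * h x b + C x c b * vfd Z (fun z => h z b) x)
      from Finset.sum_congr rfl fun b _ => vfd_mul (dC b) (dh b),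
    Finset.sum_add_distrib]

end Helper2


/-- For `V₃ = [V₁,V₂]` one has the operator identity `[Q₁,Q₂] = Q₃`. -/
theorem statement13 {n m : ℕ} (M : Set (Fin n → ℝ)) (hM : IsOpen M)
    (Y₁ Y₂ : (Fin n → ℝ) → Fin n → ℝ)
    (C₁ C₂ : (Fin n → ℝ) → Matrix (Fin m) (Fin m) ℝ)
    (τ₁ τ₂ : (Fin n → ℝ) → ℝ) (H₁ H₂ : (Fin n → ℝ) → Fin m → ℝ)
    (hY₁ : SmoothVec M Y₁) (hY₂ : SmoothVec M Y₂)
    (hC₁s : SmoothMat M C₁) (hC₂s : SmoothMat M C₂)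
    (hτ₁ : ContDiffOn ℝ (⊤ : ℕ∞) τ₁ M) (hτ₂ : ContDiffOn ℝ (⊤ : ℕ∞) τ₂ M)
    (hH₁ : SmoothVec M H₁) (hH₂ : SmoothVec M H₂)
    (hC₁ : ∀ x ∈ M, (C₁ x)ᵀ = -(C₁ x)) (hC₂ : ∀ x ∈ M, (C₂ x)ᵀ = -(C₂ x)) :
    ∀ h : (Fin n → ℝ) → Fin m → ℝ, SmoothVec M h →
      ∀ x ∈ M, ∀ a,
        QOp Y₁ C₁ τ₁ (QOp Y₂ C₂ τ₂ h) x a - QOp Y₂ C₂ τ₂ (QOp Y₁ C₁ τ₁ h) x a =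
          QOp (brY Y₁ Y₂) (brC Y₁ Y₂ C₁ C₂) (brTau Y₁ Y₂ τ₁ τ₂) h x a := by
  intro h hh x hx a
  have dh : ∀ b, DifferentiableAt ℝ (fun z => h z b) x := fun b => dAt hM (hh b) hx
  have hsum : ∀ (A B : (Fin n → ℝ) → Matrix (Fin m) (Fin m) ℝ),
      (∑ b, A x a b * ∑ c, B x b c * h x c) = ∑ b, (A x * B x) a b * h x b := by
    intro A B
    calc (∑ b, A x a b * ∑ c, B x b c * h x c)
        = ∑ b, ∑ c, A x a b * (B x b c * h x c) := by
          exact Finset.sum_congr rfl fun b _ => Finset.mul_sum _ _ _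
      _ = ∑ c, ∑ b, A x a b * (B x b c * h x c) := Finset.sum_comm
      _ = ∑ c, (A x * B x) a c * h x c := by
          refine Finset.sum_congr rfl fun c _ => ?_
          rw [Matrix.mul_apply, Finset.sum_mul]
          exact Finset.sum_congr rfl fun b _ => by ring
  have split : ∀ (Cc : (Fin n → ℝ) → Matrix (Fin m) (Fin m) ℝ)
      (Cd : (Fin n → ℝ) → Matrix (Fin m) (Fin m) ℝ)
      (W : (Fin n → ℝ) → Fin n → ℝ) (τ : (Fin n → ℝ) → ℝ),
      (∑ b, Cc x a b * (vfd W (fun z => h z b) x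
          - (-(τ x) / 2 * h x b + ∑ c, Cd x b c * h x c)))
        = (∑ b, Cc x a b * vfd W (fun z => h z b) x)
          - (-(τ x) / 2 * ∑ b, Cc x a b * h x b + ∑ b, (Cc x * Cd x) a b * h x b) := by
    intro Cc Cd W τ
    rw [← hsum Cc Cd, Finset.mul_sum, ← Finset.sum_add_distrib, ← Finset.sum_sub_distrib]
    exact Finset.sum_congr rfl fun b _ => by ring
  have splitRC : (∑ b, brC Y₁ Y₂ C₁ C₂ x a b * h x b)
      = (∑ b, vfd Y₁ (fun y => C₂ y a b) x * h x b)
        - (∑ b, vfd Y₂ (fun y => C₁ y a b) x * h x b)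
        - ((∑ b, (C₁ x * C₂ x) a b * h x b) - ∑ b, (C₂ x * C₁ x) a b * h x b) := by
    rw [← Finset.sum_sub_distrib, ← Finset.sum_sub_distrib, ← Finset.sum_sub_distrib]
    refine Finset.sum_congr rfl fun b _ => ?_
    simp only [brC, Matrix.of_apply]
    ring
  have hbrY : vfd Y₁ (vfd Y₂ (fun z => h z a)) x - vfd Y₂ (vfd Y₁ (fun z => h z a)) x
      = vfd (brY Y₁ Y₂) (fun z => h z a) x := by
    rw [vfd_comm hM hY₁ hY₂ (hh a) hx]
    simp only [vfd, brY]
  simp only [QOp, brTau]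
  rw [keyQ hM hY₂ hC₂s hτ₂ hh hx a, keyQ hM hY₁ hC₁s hτ₁ hh hx a,
    split C₁ C₂ Y₂ τ₂, split C₂ C₁ Y₁ τ₁, splitRC, ← hbrY]
  ring
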